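/- Let F be a field with more than 4 elements and let θ₁, θ₂, θ₃ be the inner automorphisms of R = M_4(F) given by conjugation by I+e₁₃, I+e₁₄, and I+e₂₃ respectively (where e_{ij} are matrix units). Then the common fixed subring {A ∈ R : θ_k(A) = A for k=1,2,3} equals the set of matrices of the form a·I + b·e₁₃ + c·e₁₄ + d·e₂₃ + e·e₂₄ with a,b,c,d,e ∈ F, which is ring-isomorphic to F[x₁,x₂,x₃,x₄]/(x₁,x₂,x₃,x₄)². -/

import Mathlib

open Matrix MvPolynomial

/-- The matrix `I + e₁₃` in `M₄(F)`. -/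
noncomputable def U13 (F : Type*) [Field F] : Matrix (Fin 4) (Fin 4) F :=
  1 + Matrix.single 0 2 1
/-- The matrix `I + e₁₄` in `M₄(F)`. -/
noncomputable def U14 (F : Type*) [Field F] : Matrix (Fin 4) (Fin 4) F :=
  1 + Matrix.single 0 3 1
/-- The matrix `I + e₂₃` in `M₄(F)`. -/
noncomputable def U23 (F : Type*) [Field F] : Matrix (Fin 4) (Fin 4) F :=
  1 + Matrix.single 1 2 1

noncomputable def NN (F : Type*) [Field F] : Fin 4 → Matrix (Fin 4) (Fin 4) F :=
  ![Matrix.single 0 2 1, Matrix.single 0 3 1, Matrix.single 1 2 1, Matrix.single 1 3 1]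

section MatrixLemmas
variable {F : Type*} [Field F]

lemma NN_mul_NN (i j : Fin 4) : NN F i * NN F j = 0 := by
  fin_cases i <;> fin_cases j <;>
    · show Matrix.single _ _ _ * Matrix.single _ _ _ = 0
      apply Matrix.single_mul_single_of_ne
      decide

lemma NN0 : NN F 0 = Matrix.single 0 2 1 := rfl
lemma NN1 : NN F 1 = Matrix.single 0 3 1 := rfl
lemma NN2 : NN F 2 = Matrix.single 1 2 1 := rfl
lemma NN3 : NN F 3 = Matrix.single 1 3 1 := rfl

lemma conj_iff (E A : Matrix (Fin 4) (Fin 4) F) (hE : E * E = 0) :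
    (1 + E)⁻¹ * A * (1 + E) = A ↔ A * E = E * A := by
  have h2 : (1 - E) * (1 + E) = 1 := by
    have : (1 - E) * (1 + E) = 1 - E * E := by noncomm_ring
    rw [this, hE, sub_zero]
  have h1 : (1 + E) * (1 - E) = 1 := by
    have : (1 + E) * (1 - E) = 1 - E * E := by noncomm_ring
    rw [this, hE, sub_zero]
  have hinv : (1 + E)⁻¹ = 1 - E := Matrix.inv_eq_left_inv h2
  rw [hinv]
  constructor
  · intro h
    have h' : (1 + E) * ((1 - E) * A * (1 + E)) = (1 + E) * A := by rw [h]
    have h'' : A * (1 + E) = (1 + E) * A := by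
      calc A * (1 + E) = ((1 + E) * (1 - E)) * A * (1 + E) := by rw [h1, one_mul]
        _ = (1 + E) * ((1 - E) * A * (1 + E)) := by noncomm_ring
        _ = (1 + E) * A := h'
    have := h''
    rw [mul_add, add_mul, mul_one, one_mul] at this
    exact add_left_cancel this
  · intro h
    have h'' : A * (1 + E) = (1 + E) * A := by rw [mul_add, add_mul, mul_one, one_mul, h]
    calc (1 - E) * A * (1 + E) = (1 - E) * (A * (1 + E)) := by rw [mul_assoc]
      _ = (1 - E) * ((1 + E) * A) := by rw [h'']
      _ = ((1 - E) * (1 + E)) * A := by rw [mul_assoc]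
      _ = A := by rw [h2, one_mul]

lemma form_of_comm (A : Matrix (Fin 4) (Fin 4) F)
    (h02 : A * Matrix.single 0 2 1 = Matrix.single 0 2 1 * A)
    (h03 : A * Matrix.single 0 3 1 = Matrix.single 0 3 1 * A)
    (h12 : A * Matrix.single 1 2 1 = Matrix.single 1 2 1 * A) :
    ∃ a b c d e : F,
      A = a • (1 : Matrix (Fin 4) (Fin 4) F) + b • Matrix.single 0 2 1 +
        c • Matrix.single 0 3 1 + d • Matrix.single 1 2 1 + e • Matrix.single 1 3 1 := by
  have e02 := fun (i j : Fin 4) => congrFun (congrFun h02 i) j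
  have e03 := fun (i j : Fin 4) => congrFun (congrFun h03 i) j
  have e12 := fun (i j : Fin 4) => congrFun (congrFun h12 i) j
  have z01 : A 0 1 = 0 := by have h := e12 0 2; simp at h; first | exact h | exact h.symm
  have z10 : A 1 0 = 0 := by have h := e02 1 2; simp at h; first | exact h | exact h.symm
  have z20 : A 2 0 = 0 := by have h := e02 0 0; simp at h; first | exact h | exact h.symm
  have z21 : A 2 1 = 0 := by have h := e02 0 1; simp at h; first | exact h | exact h.symm
  have z23 : A 2 3 = 0 := by have h := e02 0 3; simp at h; first | exact h | exact h.symm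
  have z30 : A 3 0 = 0 := by have h := e03 0 0; simp at h; first | exact h | exact h.symm
  have z31 : A 3 1 = 0 := by have h := e03 0 1; simp at h; first | exact h | exact h.symm
  have z32 : A 3 2 = 0 := by have h := e03 0 2; simp at h; first | exact h | exact h.symm
  have d22 : A 2 2 = A 0 0 := by have h := e02 0 2; simp at h; first | exact h | exact h.symm
  have d33 : A 3 3 = A 0 0 := by have h := e03 0 3; simp at h; first | exact h | exact h.symm
  have d11 : A 1 1 = A 0 0 := by
    have h := e12 1 2; simp at h
    first | exact h.trans d22 | exact h.symm.trans d22
  refine ⟨A 0 0, A 0 2, A 0 3, A 1 2, A 1 3, ?_⟩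
  ext i j
  fin_cases i <;> fin_cases j <;>
    simp [Matrix.add_apply, Matrix.smul_apply, Matrix.one_apply, Matrix.single] <;>
    first | assumption | rfl

/-- product of two nilpotent-part combinations is zero -/
lemma comb_mul_comb (b c d e b' c' d' e' : F) :
    (b • NN F 0 + c • NN F 1 + d • NN F 2 + e • NN F 3) *
      (b' • NN F 0 + c' • NN F 1 + d' • NN F 2 + e' • NN F 3) = 0 := by
  simp [add_mul, mul_add, smul_mul_assoc, mul_smul_comm, NN_mul_NN]

lemma form_mul_form (a b c d e a' b' c' d' e' : F) :
    (a • (1 : Matrix (Fin 4) (Fin 4) F) + b • NN F 0 + c • NN F 1 + d • NN F 2 + e • NN F 3) *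
      (a' • (1 : Matrix (Fin 4) (Fin 4) F) + b' • NN F 0 + c' • NN F 1 + d' • NN F 2 + e' • NN F 3)
    = (a * a') • (1 : Matrix (Fin 4) (Fin 4) F) + (a * b' + a' * b) • NN F 0 +
      (a * c' + a' * c) • NN F 1 + (a * d' + a' * d) • NN F 2 + (a * e' + a' * e) • NN F 3 := by
  simp only [add_mul, mul_add, smul_mul_assoc, mul_smul_comm, NN_mul_NN, smul_zero,
    one_mul, mul_one, smul_smul, add_zero, zero_add]
  module

set_option maxHeartbeats 1000000 in
set_option synthInstance.maxHeartbeats 400000 in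
/-- the 5 basis matrices are linearly independent: entry extraction -/
lemma indep (c : F) (d : Fin 4 → F)
    (h : c • (1 : Matrix (Fin 4) (Fin 4) F) + ∑ i : Fin 4, d i • NN F i = 0) :
    c = 0 ∧ ∀ i, d i = 0 := by
  rw [Fin.sum_univ_four] at h
  have h00 := congrFun (congrFun h 0) 0
  have h02 := congrFun (congrFun h 0) 2
  have h03 := congrFun (congrFun h 0) 3
  have h12 := congrFun (congrFun h 1) 2
  have h13 := congrFun (congrFun h 1) 3
  simp [NN, Matrix.add_apply, Matrix.smul_apply, Matrix.one_apply,
    Matrix.single, Matrix.of_apply] at h00 h02 h03 h12 h13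
  refine ⟨h00, fun i => ?_⟩
  fin_cases i <;> assumption

end MatrixLemmas

section PolyLemmas
variable {F : Type*} [Field F]

lemma I2_eq : (Ideal.span (Set.range (X : Fin 4 → MvPolynomial (Fin 4) F))) ^ 2
    = Ideal.span ((fun s => monomial s (1 : F)) ''
        {m : Fin 4 →₀ ℕ | ∃ i j : Fin 4, m = Finsupp.single i 1 + Finsupp.single j 1}) := by
  rw [pow_two, Ideal.span_mul_span']
  congr 1
  ext p
  constructor
  · rintro ⟨x, ⟨i, rfl⟩, y, ⟨j, rfl⟩, rfl⟩
    refine ⟨Finsupp.single i 1 + Finsupp.single j 1, ⟨i, j, rfl⟩, ?_⟩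
    show monomial _ _ = X i * X j
    rw [show (X i : MvPolynomial (Fin 4) F) = monomial (Finsupp.single i 1) 1 from rfl,
      show (X j : MvPolynomial (Fin 4) F) = monomial (Finsupp.single j 1) 1 from rfl,
      monomial_mul, one_mul]
  · rintro ⟨m, ⟨i, j, rfl⟩, rfl⟩
    refine ⟨X i, ⟨i, rfl⟩, X j, ⟨j, rfl⟩, ?_⟩
    show X i * X j = monomial _ _
    rw [show (X i : MvPolynomial (Fin 4) F) = monomial (Finsupp.single i 1) 1 from rfl,
      show (X j : MvPolynomial (Fin 4) F) = monomial (Finsupp.single j 1) 1 from rfl,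
      monomial_mul, one_mul]

lemma mem_I2_iff (p : MvPolynomial (Fin 4) F) :
    p ∈ (Ideal.span (Set.range (X : Fin 4 → MvPolynomial (Fin 4) F))) ^ 2 ↔
      ∀ m ∈ p.support, ∃ i j : Fin 4, Finsupp.single i 1 + Finsupp.single j 1 ≤ m := by
  rw [I2_eq, mem_ideal_span_monomial_image]
  constructor
  · intro h m hm
    obtain ⟨si, ⟨i, j, rfl⟩, hle⟩ := h m hm
    exact ⟨i, j, hle⟩
  · intro h m hm
    obtain ⟨i, j, hle⟩ := h m hm
    exact ⟨_, ⟨i, j, rfl⟩, hle⟩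

lemma coeff_zero_of_mem_I2 (p : MvPolynomial (Fin 4) F)
    (hp : p ∈ (Ideal.span (Set.range (X : Fin 4 → MvPolynomial (Fin 4) F))) ^ 2) :
    constantCoeff p = 0 ∧ ∀ i : Fin 4, coeff (Finsupp.single i 1) p = 0 := by
  rw [mem_I2_iff] at hp
  constructor
  · by_contra h
    have h0 : (0 : Fin 4 →₀ ℕ) ∈ p.support := by
      rw [mem_support_iff]; exact h
    obtain ⟨i, j, hle⟩ := hp 0 h0
    have := (Finsupp.le_def.mp hle) i
    simp [Finsupp.single_apply] at this
  · intro i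
    by_contra h
    have h0 : (Finsupp.single i 1 : Fin 4 →₀ ℕ) ∈ p.support := by
      rw [mem_support_iff]; exact h
    obtain ⟨k, l, hle⟩ := hp _ h0
    have hk := (Finsupp.le_def.mp hle) k
    have hik : i = k := by
      by_contra hne
      simp [Finsupp.single_apply, hne] at hk
    subst hik
    have hl := (Finsupp.le_def.mp hle) l
    have hil : i = l := by
      by_contra hne
      simp [Finsupp.single_apply, hne] at hl
    subst hil
    have hii := (Finsupp.le_def.mp hle) i
    simp [Finsupp.single_apply] at hii

lemma mem_I2_of_coeff (p : MvPolynomial (Fin 4) F)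
    (h0 : constantCoeff p = 0) (h1 : ∀ i : Fin 4, coeff (Finsupp.single i 1) p = 0) :
    p ∈ (Ideal.span (Set.range (X : Fin 4 → MvPolynomial (Fin 4) F))) ^ 2 := by
  rw [mem_I2_iff]
  intro m hm
  rw [mem_support_iff] at hm
  have hm0 : m ≠ 0 := by rintro rfl; exact hm h0
  obtain ⟨i, hi⟩ : ∃ i, m i ≠ 0 := by
    by_contra h
    push_neg at h
    exact hm0 (Finsupp.ext fun a => h a)
  by_cases h2 : 2 ≤ m i
  · refine ⟨i, i, Finsupp.le_def.mpr fun k => ?_⟩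
    simp only [Finsupp.add_apply, Finsupp.single_apply]
    by_cases hk : i = k
    · subst hk; simpa using h2
    · simp [hk]
  · have hmi : m i = 1 := by omega
    have hms : m ≠ Finsupp.single i 1 := by
      rintro rfl
      exact hm (h1 i)
    obtain ⟨j, hj⟩ : ∃ j, m j ≠ (Finsupp.single i 1) j := by
      by_contra h
      push_neg at h
      exact hms (Finsupp.ext fun a => h a)
    have hji : j ≠ i := by
      rintro rfl
      simp [Finsupp.single_apply, hmi] at hj
    have hjc : m j ≠ 0 := by
      intro h
      rw [h] at hj
      simp [Finsupp.single_apply, Ne.symm hji] at hj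
    refine ⟨i, j, Finsupp.le_def.mpr fun k => ?_⟩
    simp only [Finsupp.add_apply, Finsupp.single_apply]
    by_cases hki : i = k <;> by_cases hkj : j = k
    · exact absurd (hkj.trans hki.symm) hji
    · subst hki; simp [hkj, hmi]
    · subst hkj; simp [hki]; omega
    · simp [hki, hkj]

/-- formula for eval₂Hom into a commutative ring with pairwise-zero products -/
lemma eval2_formula {S : Type*} [CommRing S] (f : F →+* S) (n : Fin 4 → S)
    (hn : ∀ i j, n i * n j = 0) (p : MvPolynomial (Fin 4) F) :
    eval₂Hom f n p = f (constantCoeff p) +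
      ∑ i : Fin 4, f (coeff (Finsupp.single i 1) p) * n i := by
  induction p using MvPolynomial.induction_on with
  | C a => simp [coeff_C, eq_comm (a := (0 : Fin 4 →₀ ℕ)), Finsupp.single_eq_zero]
  | add p q hp hq =>
      rw [map_add, hp, hq]
      simp only [map_add, coeff_add, add_mul, Finset.sum_add_distrib]
      abel
  | mul_X p i hp =>
      rw [_root_.map_mul, hp, eval₂Hom_X']
      rw [add_mul, Finset.sum_mul]
      simp only [mul_assoc, hn, mul_zero, Finset.sum_const_zero, add_zero]
      have hc0 : constantCoeff (p * X i) = 0 := by simp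
      rw [hc0, map_zero, zero_add]
      have hcoeff : ∀ j : Fin 4, coeff (Finsupp.single j 1) (p * X i)
          = if j = i then constantCoeff p else 0 := by
        intro j
        rw [coeff_mul_X']
        by_cases hji : j = i
        · subst hji
          rw [if_pos (by simp [Finsupp.mem_support_iff]), if_pos rfl]
          simp [constantCoeff_eq]
        · rw [if_neg (by simp [Finsupp.mem_support_iff, Finsupp.single_apply, hji, Ne.symm hji])]
          simp [hji]
      rw [Finset.sum_congr rfl fun j _ => by rw [hcoeff j]]
      simp [apply_ite f]

end PolyLemmas


set_option maxHeartbeats 2000000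
set_option synthInstance.maxHeartbeats 1000000

/-- For a field `F` with more than 4 elements, the common fixed subring of the
inner automorphisms of `M₄(F)` given by conjugation by `I+e₁₃`, `I+e₁₄`, `I+e₂₃` equals the
set of matrices `a·I + b·e₁₃ + c·e₁₄ + d·e₂₃ + e·e₂₄`, and is ring-isomorphic to
`F[x₁,x₂,x₃,x₄]/(x₁,x₂,x₃,x₄)²`. -/
theorem stmt_3 (F : Type*) [Field F] (hF : 4 < Cardinal.mk F) :
    ({A : Matrix (Fin 4) (Fin 4) F |
        (U13 F)⁻¹ * A * U13 F = A ∧ (U14 F)⁻¹ * A * U14 F = A ∧ (U23 F)⁻¹ * A * U23 F = A}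
      = {A : Matrix (Fin 4) (Fin 4) F | ∃ a b c d e : F,
          A = a • (1 : Matrix (Fin 4) (Fin 4) F) + b • Matrix.single 0 2 1 +
            c • Matrix.single 0 3 1 + d • Matrix.single 1 2 1 + e • Matrix.single 1 3 1}) ∧
    ({A : Matrix (Fin 4) (Fin 4) F |
        (U13 F)⁻¹ * A * U13 F = A ∧ (U14 F)⁻¹ * A * U14 F = A ∧ (U23 F)⁻¹ * A * U23 F = A}
      = (Subring.centralizer ({U13 F, U14 F, U23 F} : Set (Matrix (Fin 4) (Fin 4) F)) :
          Set (Matrix (Fin 4) (Fin 4) F))) ∧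
    Nonempty
      ((Subring.centralizer ({U13 F, U14 F, U23 F} : Set (Matrix (Fin 4) (Fin 4) F))) ≃+*
        (MvPolynomial (Fin 4) F ⧸
          (Ideal.span (Set.range (X : Fin 4 → MvPolynomial (Fin 4) F))) ^ 2)) := by
  classical
  have fixed_iff : ∀ A : Matrix (Fin 4) (Fin 4) F,
      ((U13 F)⁻¹ * A * U13 F = A ∧ (U14 F)⁻¹ * A * U14 F = A ∧ (U23 F)⁻¹ * A * U23 F = A) ↔
      (A * Matrix.single 0 2 1 = Matrix.single 0 2 1 * A ∧
       A * Matrix.single 0 3 1 = Matrix.single 0 3 1 * A ∧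
       A * Matrix.single 1 2 1 = Matrix.single 1 2 1 * A) := by
    intro A
    rw [U13, U14, U23,
      conj_iff (Matrix.single 0 2 1) A (by rw [← NN0]; exact NN_mul_NN 0 0),
      conj_iff (Matrix.single 0 3 1) A (by rw [← NN1]; exact NN_mul_NN 1 1),
      conj_iff (Matrix.single 1 2 1) A (by rw [← NN2]; exact NN_mul_NN 2 2)]
  have part1 : {A : Matrix (Fin 4) (Fin 4) F |
        (U13 F)⁻¹ * A * U13 F = A ∧ (U14 F)⁻¹ * A * U14 F = A ∧ (U23 F)⁻¹ * A * U23 F = A}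
      = {A : Matrix (Fin 4) (Fin 4) F | ∃ a b c d e : F,
          A = a • (1 : Matrix (Fin 4) (Fin 4) F) + b • Matrix.single 0 2 1 +
            c • Matrix.single 0 3 1 + d • Matrix.single 1 2 1 + e • Matrix.single 1 3 1} := by
    ext A
    simp only [Set.mem_setOf_eq]
    rw [fixed_iff]
    constructor
    · rintro ⟨h1, h2, h3⟩
      exact form_of_comm A h1 h2 h3
    · rintro ⟨a, b, c, d, e, rfl⟩
      rw [← NN0, ← NN1, ← NN2, ← NN3]
      refine ⟨?_, ?_, ?_⟩ <;>
        simp [add_mul, mul_add, smul_mul_assoc, mul_smul_comm, NN_mul_NN]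
  have part2 : {A : Matrix (Fin 4) (Fin 4) F |
        (U13 F)⁻¹ * A * U13 F = A ∧ (U14 F)⁻¹ * A * U14 F = A ∧ (U23 F)⁻¹ * A * U23 F = A}
      = (Subring.centralizer ({U13 F, U14 F, U23 F} : Set (Matrix (Fin 4) (Fin 4) F)) :
          Set (Matrix (Fin 4) (Fin 4) F)) := by
    ext A
    simp only [Set.mem_setOf_eq, SetLike.mem_coe, Subring.mem_centralizer_iff]
    rw [fixed_iff]
    constructor
    · rintro ⟨h1, h2, h3⟩ g hg
      simp only [Set.mem_insert_iff, Set.mem_singleton_iff] at hg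
      rcases hg with rfl | rfl | rfl
      · rw [U13, add_mul, mul_add, one_mul, mul_one, h1]
      · rw [U14, add_mul, mul_add, one_mul, mul_one, h2]
      · rw [U23, add_mul, mul_add, one_mul, mul_one, h3]
    · intro h
      have h1 := h (U13 F) (by simp)
      have h2 := h (U14 F) (by simp)
      have h3 := h (U23 F) (by simp)
      rw [U13, add_mul, mul_add, one_mul, mul_one] at h1
      rw [U14, add_mul, mul_add, one_mul, mul_one] at h2
      rw [U23, add_mul, mul_add, one_mul, mul_one] at h3
      exact ⟨(add_left_cancel h1).symm, (add_left_cancel h2).symm, (add_left_cancel h3).symm⟩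
  refine ⟨part1, part2, ?_⟩
  -- the centralizer as a set equals the form set
  have key : (Subring.centralizer ({U13 F, U14 F, U23 F} : Set (Matrix (Fin 4) (Fin 4) F)) :
      Set (Matrix (Fin 4) (Fin 4) F))
      = {A : Matrix (Fin 4) (Fin 4) F | ∃ a b c d e : F,
          A = a • (1 : Matrix (Fin 4) (Fin 4) F) + b • Matrix.single 0 2 1 +
            c • Matrix.single 0 3 1 + d • Matrix.single 1 2 1 + e • Matrix.single 1 3 1} :=
    part2.symm.trans part1
  set S' := Subring.centralizer ({U13 F, U14 F, U23 F} : Set (Matrix (Fin 4) (Fin 4) F)) with hS'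
  have formOf : ∀ x : ↥S', ∃ a b c d e : F,
      (x : Matrix (Fin 4) (Fin 4) F) = a • (1 : Matrix (Fin 4) (Fin 4) F) + b • NN F 0 +
        c • NN F 1 + d • NN F 2 + e • NN F 3 := by
    intro x
    have hx : (x : Matrix (Fin 4) (Fin 4) F) ∈
        {A : Matrix (Fin 4) (Fin 4) F | ∃ a b c d e : F,
          A = a • (1 : Matrix (Fin 4) (Fin 4) F) + b • Matrix.single 0 2 1 +
            c • Matrix.single 0 3 1 + d • Matrix.single 1 2 1 + e • Matrix.single 1 3 1} := by
      rw [← key]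
      exact SetLike.mem_coe.mpr x.2
    obtain ⟨a, b, c, d, e, hx⟩ := hx
    exact ⟨a, b, c, d, e, by rw [hx, NN0, NN1, NN2, NN3]⟩
  have mulcomm : ∀ x y : ↥S', x * y = y * x := by
    intro x y
    obtain ⟨a, b, c, d, e, hx⟩ := formOf x
    obtain ⟨a', b', c', d', e', hy⟩ := formOf y
    apply Subtype.ext
    show (x : Matrix (Fin 4) (Fin 4) F) * y = (y : Matrix (Fin 4) (Fin 4) F) * x
    rw [hx, hy, form_mul_form, form_mul_form]
    module
  letI : CommRing ↥S' := { (inferInstance : Ring ↥S') with mul_comm := mulcomm }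
  have hscal : ∀ a : F, (algebraMap F (Matrix (Fin 4) (Fin 4) F)) a ∈ S' := by
    intro a
    apply Subring.mem_centralizer_iff.mpr
    intro g _
    rw [Algebra.algebraMap_eq_smul_one]
    rw [mul_smul_comm, smul_mul_assoc, mul_one, one_mul]
  have hmemN : ∀ i : Fin 4, NN F i ∈ S' := by
    intro i
    apply Subring.mem_centralizer_iff.mpr
    intro g hg
    simp only [Set.mem_insert_iff, Set.mem_singleton_iff] at hg
    rcases hg with rfl | rfl | rfl
    · rw [U13, ← NN0]; simp [add_mul, mul_add, NN_mul_NN]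
    · rw [U14, ← NN1]; simp [add_mul, mul_add, NN_mul_NN]
    · rw [U23, ← NN2]; simp [add_mul, mul_add, NN_mul_NN]
  set f : F →+* ↥S' :=
    RingHom.codRestrict (algebraMap F (Matrix (Fin 4) (Fin 4) F)) S' hscal with hf
  set ν : Fin 4 → ↥S' := fun i => ⟨NN F i, hmemN i⟩ with hν'
  have hν : ∀ i j, ν i * ν j = 0 := by
    intro i j
    apply Subtype.ext
    show NN F i * NN F j = 0
    exact NN_mul_NN i j
  set φ : MvPolynomial (Fin 4) F →+* ↥S' := eval₂Hom f ν with hφ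
  have hker : ∀ p ∈ (Ideal.span (Set.range (X : Fin 4 → MvPolynomial (Fin 4) F))) ^ 2,
      φ p = 0 := by
    intro p hp
    obtain ⟨h0, h1⟩ := coeff_zero_of_mem_I2 p hp
    rw [hφ, eval2_formula f ν hν, h0]
    simp [h1]
  set φq := Ideal.Quotient.lift
    ((Ideal.span (Set.range (X : Fin 4 → MvPolynomial (Fin 4) F))) ^ 2) φ hker with hφq
  have val_f : ∀ a : F, ((f a : ↥S') : Matrix (Fin 4) (Fin 4) F)
      = a • (1 : Matrix (Fin 4) (Fin 4) F) := by
    intro a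
    show (algebraMap F (Matrix (Fin 4) (Fin 4) F)) a = a • 1
    rw [Algebra.algebraMap_eq_smul_one]
  have val_phi : ∀ p : MvPolynomial (Fin 4) F,
      ((φ p : ↥S') : Matrix (Fin 4) (Fin 4) F)
        = (constantCoeff p) • (1 : Matrix (Fin 4) (Fin 4) F) +
          ∑ i : Fin 4, (coeff (Finsupp.single i 1) p) • NN F i := by
    intro p
    rw [hφ, eval2_formula f ν hν]
    show S'.subtype (f (constantCoeff p) + ∑ i : Fin 4, f (coeff (Finsupp.single i 1) p) * ν i) = _
    rw [map_add, map_sum]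
    congr 1
    · exact val_f _
    · refine Finset.sum_congr rfl fun i _ => ?_
      rw [_root_.map_mul]
      show ((f _ : ↥S') : Matrix (Fin 4) (Fin 4) F) * NN F i = _
      rw [val_f, smul_mul_assoc, one_mul]
      rfl
  have hinj : Function.Injective φq := by
    rw [injective_iff_map_eq_zero]
    intro q hq
    obtain ⟨p, rfl⟩ := Ideal.Quotient.mk_surjective q
    have hp0 : φ p = 0 := by rwa [hφq, Ideal.Quotient.lift_mk] at hq
    have hval : (constantCoeff p) • (1 : Matrix (Fin 4) (Fin 4) F) +
        ∑ i : Fin 4, (coeff (Finsupp.single i 1) p) • NN F i = 0 := by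
      rw [← val_phi p, hp0]
      rfl
    obtain ⟨h0, h1⟩ := indep _ _ hval
    rw [Ideal.Quotient.eq_zero_iff_mem]
    exact mem_I2_of_coeff p h0 h1
  have val_lin : ∀ a b c d e : F,
      S'.subtype (f a + f b * ν 0 + f c * ν 1 + f d * ν 2 + f e * ν 3)
        = a • (1 : Matrix (Fin 4) (Fin 4) F) + b • NN F 0 + c • NN F 1 + d • NN F 2 +
          e • NN F 3 := by
    intro a b c d e
    rw [map_add, map_add, map_add, map_add, _root_.map_mul, _root_.map_mul, _root_.map_mul,
      _root_.map_mul]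
    have h1 : ∀ t : F, S'.subtype (f t) = t • (1 : Matrix (Fin 4) (Fin 4) F) := val_f
    have h2 : ∀ i : Fin 4, S'.subtype (ν i) = NN F i := fun i => rfl
    rw [h1, h1, h1, h1, h1, h2, h2, h2, h2, smul_mul_assoc, smul_mul_assoc, smul_mul_assoc,
      smul_mul_assoc, one_mul, one_mul, one_mul, one_mul]
  have hsurj : Function.Surjective φq := by
    intro x
    obtain ⟨a, b, c, d, e, hx⟩ := formOf x
    refine ⟨Ideal.Quotient.mk _ (C a + C b * X 0 + C c * X 1 + C d * X 2 + C e * X 3), ?_⟩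
    rw [hφq, Ideal.Quotient.lift_mk]
    apply Subtype.ext
    show S'.subtype (φ (C a + C b * X 0 + C c * X 1 + C d * X 2 + C e * X 3))
      = (x : Matrix (Fin 4) (Fin 4) F)
    have hφlin : φ (C a + C b * X 0 + C c * X 1 + C d * X 2 + C e * X 3)
        = f a + f b * ν 0 + f c * ν 1 + f d * ν 2 + f e * ν 3 := by
      rw [hφ]
      simp only [map_add, _root_.map_mul, eval₂Hom_C, eval₂Hom_X']
    rw [hφlin, val_lin, hx]
  exact ⟨(RingEquiv.ofBijective φq ⟨hinj, hsurj⟩).symm⟩
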